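/- Let (X_1, X_2) and (Y_1, Y_2) be random vectors in R^2 with the same first marginal (Law(X_1) = Law(Y_1)). Then the Wasserstein-1 distance between the second marginals satisfies W_1(X_2, Y_2)^2 \le K (E[(X_1 - X_2)^2] \vee E[(Y_1 - Y_2)^2]) \cdot KL(X || Y) for a universal constant K, where KL(X||Y) is the KL divergence between the joint laws. -/

import Mathlib

open MeasureTheory Real

/-- Kullback–Leibler divergence `KL(μ ‖ ν) = ∫ log(dμ/dν) dμ`. -/
noncomputable def klDiv {α : Type*} [MeasurableSpace α] (μ ν : Measure α) : ℝ :=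
  ∫ x, Real.log ((μ.rnDeriv ν x).toReal) ∂μ

/-- Wasserstein-1 distance on `ℝ`, as the infimum of the transport cost over couplings. -/
noncomputable def W1 (μ ν : Measure ℝ) : ℝ :=
  ⨅ (c : {c : Measure (ℝ × ℝ) // c.map Prod.fst = μ ∧ c.map Prod.snd = ν}),
    ∫ z, |z.1 - z.2| ∂c.1

section Aux

open ProbabilityTheory

lemma key_pointwise {t : ℝ} (ht : 0 ≤ t) :
    (t - 1) ^ 2 / (2 * (t + 1)) ≤ t * Real.log t - t + 1 := by
  rcases eq_or_lt_of_le ht with rfl | ht'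
  · simp [Real.log_zero]; norm_num
  set s := Real.sqrt t with hs
  have hst : 0 < s := Real.sqrt_pos.2 ht'
  have hsq : s ^ 2 = t := Real.sq_sqrt ht
  have hlogt : Real.log t = 2 * Real.log s := by
    rw [hs, Real.log_sqrt ht]; ring
  have h1 : Real.log s⁻¹ ≤ s⁻¹ - 1 := Real.log_le_sub_one_of_pos (inv_pos.2 hst)
  rw [Real.log_inv] at h1
  have h1' : 1 - s⁻¹ ≤ Real.log s := by linarith
  have hsinv : s⁻¹ * s = 1 := inv_mul_cancel₀ (ne_of_gt hst)
  have hs2 : s ^ 2 - s ≤ s ^ 2 * Real.log s := by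
    have h2 := mul_le_mul_of_nonneg_left h1' (le_of_lt (mul_pos hst hst))
    have : s * s * (1 - s⁻¹) = s ^ 2 - s := by field_simp
    nlinarith [h2]
  rw [div_le_iff₀ (by positivity : (0:ℝ) < 2 * (t + 1))]
  rw [hlogt, ← hsq]
  nlinarith [hs2, sq_nonneg ((s - 1) ^ 2), sq_nonneg (s - 1), sq_nonneg (s + 1),
    sq_nonneg (s ^ 2 - 1), hst]

variable {α β γ : Type*} [MeasurableSpace α] [MeasurableSpace β] [MeasurableSpace γ]

lemma map_compProd_fst (μ : Measure α) [SFinite μ] (ζ : Kernel α (β × γ)) [IsSFiniteKernel ζ] :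
    (μ ⊗ₘ ζ).map (fun q => (q.1, q.2.1)) = μ ⊗ₘ ζ.fst := by
  ext s hs
  rw [Measure.map_apply (by fun_prop) hs,
    Measure.compProd_apply ((by fun_prop : Measurable fun q : α × β × γ => (q.1, q.2.1)) hs),
    Measure.compProd_apply hs]
  congr 1
  funext a
  rw [Kernel.fst_apply' _ _ (measurable_prodMk_left hs)]
  rfl

lemma map_compProd_snd (μ : Measure α) [SFinite μ] (ζ : Kernel α (β × γ)) [IsSFiniteKernel ζ] :
    (μ ⊗ₘ ζ).map (fun q => (q.1, q.2.2)) = μ ⊗ₘ ζ.snd := by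
  ext s hs
  rw [Measure.map_apply (by fun_prop) hs,
    Measure.compProd_apply ((by fun_prop : Measurable fun q : α × β × γ => (q.1, q.2.2)) hs),
    Measure.compProd_apply hs]
  congr 1
  funext a
  rw [Kernel.snd_apply' _ _ (measurable_prodMk_left hs)]
  rfl

lemma measure_add_cancel (h a b : Measure α) [IsFiniteMeasure h] (hab : h + a = h + b) : a = b := by
  ext s hs
  have := congrArg (fun m : Measure α => m s) hab
  simp only [Measure.add_apply] at this
  exact (ENNReal.add_right_inj (measure_ne_top h s)).mp this

lemma W1_le_cost {μ ν : Measure ℝ} (c : Measure (ℝ × ℝ))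
    (h1 : c.map Prod.fst = μ) (h2 : c.map Prod.snd = ν) :
    W1 μ ν ≤ ∫ p, |p.1 - p.2| ∂c := by
  have hbdd : BddBelow (Set.range fun c' : {c' : Measure (ℝ × ℝ) //
      c'.map Prod.fst = μ ∧ c'.map Prod.snd = ν} => ∫ z, |z.1 - z.2| ∂c'.1) := by
    refine ⟨0, ?_⟩
    rintro x ⟨c', rfl⟩
    exact integral_nonneg fun p => abs_nonneg _
  exact ciInf_le hbdd (⟨c, h1, h2⟩ :
    {c' : Measure (ℝ × ℝ) // c'.map Prod.fst = μ ∧ c'.map Prod.snd = ν})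

lemma W1_nonneg (μ ν : Measure ℝ) : 0 ≤ W1 μ ν :=
  Real.iInf_nonneg fun _ => integral_nonneg fun p => abs_nonneg _

end Aux

open ProbabilityTheory

set_option maxHeartbeats 2000000 in
theorem w1_kl_bound :
    ∃ K : ℝ, 0 < K ∧ ∀ (μ ν : Measure (ℝ × ℝ)),
      IsProbabilityMeasure μ → IsProbabilityMeasure ν →
      μ.map Prod.fst = ν.map Prod.fst →
      μ ≪ ν →
      Integrable (fun z => Real.log ((μ.rnDeriv ν z).toReal)) μ →
      Integrable (fun z : ℝ × ℝ => (z.1 - z.2) ^ 2) μ →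
      Integrable (fun z : ℝ × ℝ => (z.1 - z.2) ^ 2) ν →
      W1 (μ.map Prod.snd) (ν.map Prod.snd) ^ 2
        ≤ K * max (∫ z, (z.1 - z.2) ^ 2 ∂μ) (∫ z, (z.1 - z.2) ^ 2 ∂ν) * klDiv μ ν := by
  refine ⟨4, by norm_num, fun μ ν hμ hν hfst hac hKLint hIμ hIν => ?_⟩
  set ρ := μ.rnDeriv ν with hρ
  have hρm : Measurable ρ := Measure.measurable_rnDeriv μ ν
  have htm : Measurable fun z => (ρ z).toReal := hρm.ennreal_toReal
  set Iμ := ∫ z, (z.1 - z.2) ^ 2 ∂μ with hIμdef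
  set Iν := ∫ z, (z.1 - z.2) ^ 2 ∂ν with hIνdef
  have hIμ0 : 0 ≤ Iμ := integral_nonneg fun z => sq_nonneg _
  have hIν0 : 0 ≤ Iν := integral_nonneg fun z => sq_nonneg _
  -- KL facts
  have hInt_t : Integrable (fun z => (ρ z).toReal) ν := Measure.integrable_toReal_rnDeriv
  have hInt_tlogt : Integrable (fun z => (ρ z).toReal * Real.log (ρ z).toReal) ν := by
    have := (MeasureTheory.integrable_rnDeriv_smul_iff hac).mpr hKLint
    simpa [smul_eq_mul] using this
  have hint_eq : ∫ z, (ρ z).toReal * Real.log (ρ z).toReal ∂ν = klDiv μ ν := by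
    have := MeasureTheory.integral_rnDeriv_smul hac (f := fun z => Real.log (ρ z).toReal)
    simpa [smul_eq_mul, klDiv] using this
  have h_t_int : ∫ z, (ρ z).toReal ∂ν = 1 := by
    rw [Measure.integral_toReal_rnDeriv hac]; simp
  set φ := fun z => (ρ z).toReal * Real.log (ρ z).toReal - (ρ z).toReal + 1 with hφdef
  have h12 : Integrable (fun z => (ρ z).toReal * Real.log (ρ z).toReal - (ρ z).toReal) ν :=
    hInt_tlogt.sub hInt_t
  have hφint : Integrable φ ν := h12.add (integrable_const 1)
  have hφnonneg : ∀ z, 0 ≤ φ z := fun z =>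
    le_trans (div_nonneg (sq_nonneg _) (by positivity)) (key_pointwise ENNReal.toReal_nonneg)
  have hφint_eq : ∫ z, φ z ∂ν = klDiv μ ν := by
    rw [hφdef]
    rw [integral_add h12 (integrable_const 1),
      integral_sub hInt_tlogt hInt_t, hint_eq, h_t_int]
    simp
  have hKL0 : 0 ≤ klDiv μ ν := hφint_eq ▸ integral_nonneg hφnonneg
  -- the B bound
  have hB : ∫⁻ z, ENNReal.ofReal (((ρ z).toReal - 1) ^ 2 / ((ρ z).toReal + 1)) ∂ν
      ≤ ENNReal.ofReal (2 * klDiv μ ν) := by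
    have hmono : ∀ z : ℝ × ℝ, ENNReal.ofReal (((ρ z).toReal - 1) ^ 2 / ((ρ z).toReal + 1))
        ≤ ENNReal.ofReal (2 * φ z) := by
      intro z
      apply ENNReal.ofReal_le_ofReal
      have ht : (0:ℝ) ≤ (ρ z).toReal := ENNReal.toReal_nonneg
      have hk := key_pointwise ht
      have : ((ρ z).toReal - 1) ^ 2 / ((ρ z).toReal + 1)
          = 2 * (((ρ z).toReal - 1) ^ 2 / (2 * ((ρ z).toReal + 1))) := by
        field_simp
      rw [this, hφdef]
      linarith
    calc ∫⁻ z, ENNReal.ofReal (((ρ z).toReal - 1) ^ 2 / ((ρ z).toReal + 1)) ∂ν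
        ≤ ∫⁻ z, ENNReal.ofReal (2 * φ z) ∂ν := lintegral_mono hmono
      _ = ENNReal.ofReal (∫ z, 2 * φ z ∂ν) := by
          rw [← ofReal_integral_eq_lintegral_ofReal (hφint.const_mul 2)
            (Filter.Eventually.of_forall fun z => by
              have := hφnonneg z; positivity)]
      _ = ENNReal.ofReal (2 * klDiv μ ν) := by
          rw [integral_const_mul, hφint_eq]
  -- the A bound
  have hA : ∫⁻ z, ENNReal.ofReal ((z.1 - z.2) ^ 2 * ((ρ z).toReal + 1)) ∂ν
      = ENNReal.ofReal (Iμ + Iν) := by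
    have hsplit : ∀ᵐ z ∂ν, ENNReal.ofReal ((z.1 - z.2) ^ 2 * ((ρ z).toReal + 1))
        = ρ z * ENNReal.ofReal ((z.1 - z.2) ^ 2) + ENNReal.ofReal ((z.1 - z.2) ^ 2) := by
      filter_upwards [Measure.rnDeriv_lt_top μ ν] with z hz
      rw [ENNReal.ofReal_mul (sq_nonneg _), ENNReal.ofReal_add ENNReal.toReal_nonneg zero_le_one,
        ENNReal.ofReal_toReal hz.ne, ENNReal.ofReal_one, mul_add, mul_one, mul_comm]
    rw [lintegral_congr_ae hsplit,
      lintegral_add_right _ (by fun_prop : Measurable fun z : ℝ × ℝ => ENNReal.ofReal ((z.1 - z.2) ^ 2)),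
      MeasureTheory.lintegral_rnDeriv_mul hac (by fun_prop : Measurable fun z : ℝ × ℝ =>
        ENNReal.ofReal ((z.1 - z.2) ^ 2)).aemeasurable,
      ← ofReal_integral_eq_lintegral_ofReal hIμ
        (Filter.Eventually.of_forall fun z => sq_nonneg _),
      ← ofReal_integral_eq_lintegral_ofReal hIν
        (Filter.Eventually.of_forall fun z => sq_nonneg _),
      ← ENNReal.ofReal_add hIμ0 hIν0]
  -- main W1 bound
  have hW1 : W1 (μ.map Prod.snd) (ν.map Prod.snd)
      ≤ Real.sqrt (Iμ + Iν) * Real.sqrt (2 * klDiv μ ν) := by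
    have hm_min : Measurable fun z : ℝ × ℝ => min (ρ z) 1 := hρm.min measurable_const
    set η := ν.withDensity (fun z => min (ρ z) 1) with hη
    set a := ν.withDensity (fun z => ρ z - min (ρ z) 1) with ha
    set b := ν.withDensity (fun z => 1 - min (ρ z) 1) with hb
    have hμeq : η + a = μ := by
      rw [hη, ha, ← withDensity_add_left hm_min]
      have : ((fun z : ℝ × ℝ => min (ρ z) 1) + fun z => ρ z - min (ρ z) 1) = ρ :=
        funext fun z => add_tsub_cancel_of_le (min_le_left _ _)
      rw [this, Measure.withDensity_rnDeriv_eq μ ν hac]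
    have hνeq : η + b = ν := by
      rw [hη, hb, ← withDensity_add_left hm_min]
      have : ((fun z : ℝ × ℝ => min (ρ z) 1) + fun z => 1 - min (ρ z) 1) = fun _ => 1 :=
        funext fun z => add_tsub_cancel_of_le (min_le_right _ _)
      rw [this]
      exact withDensity_one
    haveI : IsFiniteMeasure η := isFiniteMeasure_of_le μ
      (by rw [← hμeq]; exact Measure.le_add_right le_rfl)
    haveI : IsFiniteMeasure a := isFiniteMeasure_of_le μ
      (by rw [← hμeq]; exact Measure.le_add_left le_rfl)
    haveI : IsFiniteMeasure b := isFiniteMeasure_of_le ν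
      (by rw [← hνeq]; exact Measure.le_add_left le_rfl)
    have hs_fin : ∫⁻ z, min (ρ z) 1 ∂ν ≠ ⊤ := by
      refine ne_top_of_le_ne_top ?_ (lintegral_mono fun z => min_le_right _ _)
      simp
    have ha_univ : a Set.univ = 1 - ∫⁻ z, min (ρ z) 1 ∂ν := by
      rw [ha, withDensity_apply _ MeasurableSet.univ, Measure.restrict_univ,
        lintegral_sub hm_min hs_fin (Filter.Eventually.of_forall fun z => min_le_left _ _),
        Measure.lintegral_rnDeriv hac, measure_univ]
    have hb_univ : b Set.univ = 1 - ∫⁻ z, min (ρ z) 1 ∂ν := by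
      rw [hb, withDensity_apply _ MeasurableSet.univ, Measure.restrict_univ,
        lintegral_sub hm_min hs_fin (Filter.Eventually.of_forall fun z => min_le_right _ _),
        lintegral_one, measure_univ]
    have hba : b Set.univ = a Set.univ := by rw [ha_univ, hb_univ]
    set r := a Set.univ with hr
    have hrtop : r ≠ ⊤ := measure_ne_top a _
    haveI : IsFiniteMeasure (η.map Prod.fst) := by
      constructor
      rw [Measure.map_apply measurable_fst MeasurableSet.univ]
      exact measure_lt_top η _
    have hab_fst : a.map Prod.fst = b.map Prod.fst := by
      refine measure_add_cancel (η.map Prod.fst) _ _ ?_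
      rw [← Measure.map_add _ _ measurable_fst, ← Measure.map_add _ _ measurable_fst, hμeq, hνeq,
        hfst]
    by_cases hr0 : r = 0
    · -- degenerate case: μ = ν
      have ha0 : a = 0 := Measure.measure_univ_eq_zero.mp hr0
      have hb0 : b = 0 := Measure.measure_univ_eq_zero.mp (hba.trans hr0)
      have hμν : μ = ν := by rw [← hμeq, ← hνeq, ha0, hb0]
      have hc1 : (μ.map (fun z : ℝ × ℝ => (z.2, z.2))).map Prod.fst = μ.map Prod.snd := by
        rw [Measure.map_map measurable_fst (by fun_prop)]; rfl
      have hc2 : (μ.map (fun z : ℝ × ℝ => (z.2, z.2))).map Prod.snd = ν.map Prod.snd := by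
        rw [Measure.map_map measurable_snd (by fun_prop), ← hμν]; rfl
      refine le_trans (W1_le_cost _ hc1 hc2) ?_
      have hzero : ∫ p : ℝ × ℝ, |p.1 - p.2| ∂(μ.map (fun z : ℝ × ℝ => (z.2, z.2))) = 0 := by
        rw [integral_map (φ := fun z : ℝ × ℝ => (z.2, z.2)) (f := fun p : ℝ × ℝ => |p.1 - p.2|) (by fun_prop)
          ((measurable_fst.sub measurable_snd).abs).aestronglyMeasurable]
        simp
      rw [hzero]
      positivity
    · -- main case
      set P := (r⁻¹ : ENNReal) • a with hP
      set Q := (r⁻¹ : ENNReal) • b with hQ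
      haveI hPp : IsProbabilityMeasure P := by
        constructor
        rw [hP, Measure.smul_apply, smul_eq_mul]
        exact ENNReal.inv_mul_cancel hr0 hrtop
      haveI hQp : IsProbabilityMeasure Q := by
        constructor
        rw [hQ, Measure.smul_apply, smul_eq_mul, hba]
        exact ENNReal.inv_mul_cancel hr0 hrtop
      have hQfst : Q.fst = P.fst := by
        rw [hP, hQ]
        simp only [Measure.fst]
        rw [Measure.map_smul, Measure.map_smul, hab_fst]
      haveI : IsFiniteMeasure P := ⟨by rw [hPp.measure_univ]; exact ENNReal.one_lt_top⟩
      haveI : IsFiniteMeasure Q := ⟨by rw [hQp.measure_univ]; exact ENNReal.one_lt_top⟩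
      set κ := P.condKernel with hκ
      set ξ := Q.condKernel with hξ
      haveI : IsMarkovKernel κ := by rw [hκ]; infer_instance
      haveI : IsMarkovKernel ξ := by rw [hξ]; infer_instance
      have hPdis : P.fst ⊗ₘ κ = P := by rw [hκ]; exact P.disintegrate _
      have hQdis : P.fst ⊗ₘ ξ = Q := by rw [← hQfst, hξ]; exact Q.disintegrate _
      set M := P.fst ⊗ₘ (κ ×ₖ ξ) with hM
      set c := η.map (fun z : ℝ × ℝ => (z.2, z.2)) + r • (M.map Prod.snd) with hc
      have hrP : r • P = a := by rw [hP, smul_smul, ENNReal.mul_inv_cancel hr0 hrtop, one_smul]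
      have hrQ : r • Q = b := by
        rw [hQ, smul_smul, ENNReal.mul_inv_cancel hr0 hrtop, one_smul]
      have hMfst : M.map (fun q : ℝ × ℝ × ℝ => q.2.1) = P.map Prod.snd := by
        have h1 : M.map (fun q : ℝ × ℝ × ℝ => q.2.1)
            = (M.map (fun q : ℝ × ℝ × ℝ => (q.1, q.2.1))).map Prod.snd := by
          rw [Measure.map_map measurable_snd (by fun_prop)]; rfl
        rw [h1, hM, map_compProd_fst, Kernel.fst_prod, hPdis]
      have hMsnd : M.map (fun q : ℝ × ℝ × ℝ => q.2.2) = Q.map Prod.snd := by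
        have h1 : M.map (fun q : ℝ × ℝ × ℝ => q.2.2)
            = (M.map (fun q : ℝ × ℝ × ℝ => (q.1, q.2.2))).map Prod.snd := by
          rw [Measure.map_map measurable_snd (by fun_prop)]; rfl
        rw [h1, hM, map_compProd_snd, Kernel.snd_prod, hQdis]
      have e1 : (η.map (fun z : ℝ × ℝ => (z.2, z.2))).map Prod.fst = η.map Prod.snd := by
        rw [Measure.map_map measurable_fst (by fun_prop)]; rfl
      have e1' : (η.map (fun z : ℝ × ℝ => (z.2, z.2))).map Prod.snd = η.map Prod.snd := by
        rw [Measure.map_map measurable_snd (by fun_prop)]; rfl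
      have e2 : (M.map Prod.snd).map Prod.fst = M.map (fun q : ℝ × ℝ × ℝ => q.2.1) := by
        rw [Measure.map_map measurable_fst measurable_snd]; rfl
      have e2' : (M.map Prod.snd).map Prod.snd = M.map (fun q : ℝ × ℝ × ℝ => q.2.2) := by
        rw [Measure.map_map measurable_snd measurable_snd]; rfl
      have hc1 : c.map Prod.fst = μ.map Prod.snd := by
        rw [hc, Measure.map_add _ _ measurable_fst, Measure.map_smul, e1, e2, hMfst,
          ← Measure.map_smul, hrP, ← Measure.map_add _ _ measurable_snd, hμeq]
      have hc2 : c.map Prod.snd = ν.map Prod.snd := by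
        rw [hc, Measure.map_add _ _ measurable_snd, Measure.map_smul, e1', e2', hMsnd,
          ← Measure.map_smul, hrQ, ← Measure.map_add _ _ measurable_snd, hνeq]
      -- cost bound
      have hcost : ∫⁻ p : ℝ × ℝ, ENNReal.ofReal |p.1 - p.2| ∂c
          ≤ ∫⁻ z : ℝ × ℝ, ENNReal.ofReal |z.1 - z.2| ∂a
            + ∫⁻ z : ℝ × ℝ, ENNReal.ofReal |z.1 - z.2| ∂b := by
        have hterm1 : ∫⁻ q : ℝ × ℝ × ℝ, ENNReal.ofReal |q.2.1 - q.1| ∂M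
            = ∫⁻ z : ℝ × ℝ, ENNReal.ofReal |z.1 - z.2| ∂P := by
          conv_rhs => rw [← hPdis]
          rw [hM, Measure.lintegral_compProd (by fun_prop), Measure.lintegral_compProd (by fun_prop)]
          congr 1
          funext x
          rw [Kernel.prod_apply, lintegral_prod _ (by fun_prop)]
          simp [lintegral_const, abs_sub_comm]
        have hterm2 : ∫⁻ q : ℝ × ℝ × ℝ, ENNReal.ofReal |q.1 - q.2.2| ∂M
            = ∫⁻ z : ℝ × ℝ, ENNReal.ofReal |z.1 - z.2| ∂Q := by
          conv_rhs => rw [← hQdis]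
          rw [hM, Measure.lintegral_compProd (by fun_prop), Measure.lintegral_compProd (by fun_prop)]
          congr 1
          funext x
          rw [Kernel.prod_apply, lintegral_prod _ (by fun_prop)]
          simp [lintegral_const]
        have hPa : r * ∫⁻ z : ℝ × ℝ, ENNReal.ofReal |z.1 - z.2| ∂P
            = ∫⁻ z : ℝ × ℝ, ENNReal.ofReal |z.1 - z.2| ∂a := by
          rw [← smul_eq_mul, ← lintegral_smul_measure, hrP]
        have hQb : r * ∫⁻ z : ℝ × ℝ, ENNReal.ofReal |z.1 - z.2| ∂Q
            = ∫⁻ z : ℝ × ℝ, ENNReal.ofReal |z.1 - z.2| ∂b := by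
          rw [← smul_eq_mul, ← lintegral_smul_measure, hrQ]
        rw [hc, lintegral_add_measure, lintegral_smul_measure]
        have hd : ∫⁻ p : ℝ × ℝ, ENNReal.ofReal |p.1 - p.2| ∂(η.map fun z : ℝ × ℝ => (z.2, z.2))
            = 0 := by
          rw [lintegral_map (by fun_prop) (by fun_prop)]
          simp
        rw [hd, zero_add, lintegral_map (by fun_prop) measurable_snd]
        calc r * ∫⁻ q : ℝ × ℝ × ℝ, ENNReal.ofReal |q.2.1 - q.2.2| ∂M
            ≤ r * ∫⁻ q : ℝ × ℝ × ℝ,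
                (ENNReal.ofReal |q.2.1 - q.1| + ENNReal.ofReal |q.1 - q.2.2|) ∂M := by
              refine mul_le_mul_right (lintegral_mono fun q => ?_) r
              rw [← ENNReal.ofReal_add (abs_nonneg _) (abs_nonneg _)]
              exact ENNReal.ofReal_le_ofReal (abs_sub_le _ _ _)
          _ = r * (∫⁻ q : ℝ × ℝ × ℝ, ENNReal.ofReal |q.2.1 - q.1| ∂M
                + ∫⁻ q : ℝ × ℝ × ℝ, ENNReal.ofReal |q.1 - q.2.2| ∂M) := by
              rw [lintegral_add_left (by fun_prop)]
          _ = ∫⁻ z : ℝ × ℝ, ENNReal.ofReal |z.1 - z.2| ∂a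
                + ∫⁻ z : ℝ × ℝ, ENNReal.ofReal |z.1 - z.2| ∂b := by
              rw [mul_add, hterm1, hterm2, hPa, hQb]
      -- rewrite as integral against ν with density
      have hdens : ∫⁻ z : ℝ × ℝ, ENNReal.ofReal |z.1 - z.2| ∂a
            + ∫⁻ z : ℝ × ℝ, ENNReal.ofReal |z.1 - z.2| ∂b
          ≤ ENNReal.ofReal (Iμ + Iν) ^ (1 / 2 : ℝ)
            * ENNReal.ofReal (2 * klDiv μ ν) ^ (1 / 2 : ℝ) := by
        have hGm : Measurable fun z : ℝ × ℝ => ENNReal.ofReal |z.1 - z.2| :=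
          (measurable_fst.sub measurable_snd).abs.ennreal_ofReal
        set g := fun z : ℝ × ℝ => ENNReal.ofReal (|z.1 - z.2| * Real.sqrt ((ρ z).toReal + 1))
          with hgdef
        set h := fun z : ℝ × ℝ =>
          ENNReal.ofReal (|(ρ z).toReal - 1| / Real.sqrt ((ρ z).toReal + 1)) with hhdef
        have hgm : Measurable g :=
          ((measurable_fst.sub measurable_snd).abs.mul
            (htm.add measurable_const).sqrt).ennreal_ofReal
        have hhm : Measurable h :=
          ((htm.sub measurable_const).abs.div
            (htm.add measurable_const).sqrt).ennreal_ofReal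
        -- step 1: withDensity rewrite
        have step1 : ∫⁻ z : ℝ × ℝ, ENNReal.ofReal |z.1 - z.2| ∂a
              + ∫⁻ z : ℝ × ℝ, ENNReal.ofReal |z.1 - z.2| ∂b
            = ∫⁻ z : ℝ × ℝ, ((ρ z - min (ρ z) 1) * ENNReal.ofReal |z.1 - z.2|
              + (1 - min (ρ z) 1) * ENNReal.ofReal |z.1 - z.2|) ∂ν := by
          rw [ha, hb, lintegral_withDensity_eq_lintegral_mul ν (f := fun z => ρ z - min (ρ z) 1) (hρm.sub hm_min) hGm,
            lintegral_withDensity_eq_lintegral_mul ν (f := fun z => 1 - min (ρ z) 1) (measurable_const.sub hm_min) hGm]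
          simp only [Pi.mul_apply]
          rw [← lintegral_add_left (f := fun z => (ρ z - min (ρ z) 1) * ENNReal.ofReal |z.1 - z.2|) ((hρm.sub hm_min).mul hGm)]
        -- step 2: a.e. identification with g * h
        have step2 : ∀ᵐ z ∂ν, (ρ z - min (ρ z) 1) * ENNReal.ofReal |z.1 - z.2|
              + (1 - min (ρ z) 1) * ENNReal.ofReal |z.1 - z.2| = g z * h z := by
          filter_upwards [Measure.rnDeriv_lt_top μ ν] with z hz
          have ht0 : (0:ℝ) ≤ (ρ z).toReal := ENNReal.toReal_nonneg
          have hsq : (0:ℝ) < Real.sqrt ((ρ z).toReal + 1) := Real.sqrt_pos.2 (by linarith)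
          have hgh : g z * h z = ENNReal.ofReal (|(ρ z).toReal - 1| * |z.1 - z.2|) := by
            rw [hgdef, hhdef, ← ENNReal.ofReal_mul (by positivity)]
            congr 1
            field_simp
          have hdiff : (ρ z - min (ρ z) 1) + (1 - min (ρ z) 1)
              = ENNReal.ofReal |(ρ z).toReal - 1| := by
            rcases le_total (ρ z) 1 with h1 | h1
            · have ht1 : (ρ z).toReal ≤ 1 := by
                have := ENNReal.toReal_mono ENNReal.one_ne_top h1
                simpa using this
              rw [min_eq_left h1, tsub_self, zero_add, abs_of_nonpos (by linarith), neg_sub,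
                ENNReal.ofReal_sub _ ENNReal.toReal_nonneg, ENNReal.ofReal_one,
                ENNReal.ofReal_toReal hz.ne]
            · have ht1 : (1:ℝ) ≤ (ρ z).toReal := by
                have := ENNReal.toReal_mono hz.ne h1
                simpa using this
              rw [min_eq_right h1, tsub_self, add_zero, abs_of_nonneg (by linarith),
                ENNReal.ofReal_sub _ zero_le_one, ENNReal.ofReal_one,
                ENNReal.ofReal_toReal hz.ne]
          rw [hgh, ← add_mul, hdiff, ← ENNReal.ofReal_mul (abs_nonneg _)]
        -- step 3: Hölder
        have hconj : Real.HolderConjugate 2 2 := Real.HolderConjugate.two_two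
        have hholder := ENNReal.lintegral_mul_le_Lp_mul_Lq ν hconj hgm.aemeasurable
          hhm.aemeasurable
        -- step 4: identify the two factors
        have hg2 : ∀ z : ℝ × ℝ, g z ^ (2:ℝ)
            = ENNReal.ofReal ((z.1 - z.2) ^ 2 * ((ρ z).toReal + 1)) := by
          intro z
          rw [hgdef, ENNReal.ofReal_rpow_of_nonneg (by positivity) (by norm_num)]
          congr 1
          rw [show ((2:ℝ)) = ((2:ℕ):ℝ) by norm_num, Real.rpow_natCast]
          rw [mul_pow, sq_abs, Real.sq_sqrt (by positivity)]
        have hh2 : ∀ z : ℝ × ℝ, h z ^ (2:ℝ)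
            = ENNReal.ofReal (((ρ z).toReal - 1) ^ 2 / ((ρ z).toReal + 1)) := by
          intro z
          rw [hhdef, ENNReal.ofReal_rpow_of_nonneg (by positivity) (by norm_num)]
          congr 1
          rw [show ((2:ℝ)) = ((2:ℕ):ℝ) by norm_num, Real.rpow_natCast]
          rw [div_pow, sq_abs, Real.sq_sqrt (by positivity)]
        calc ∫⁻ z : ℝ × ℝ, ENNReal.ofReal |z.1 - z.2| ∂a
              + ∫⁻ z : ℝ × ℝ, ENNReal.ofReal |z.1 - z.2| ∂b
            = ∫⁻ z, g z * h z ∂ν := by rw [step1]; exact lintegral_congr_ae step2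
          _ ≤ (∫⁻ z, g z ^ (2:ℝ) ∂ν) ^ (1 / 2 : ℝ) * (∫⁻ z, h z ^ (2:ℝ) ∂ν) ^ (1 / 2 : ℝ) := by
              simpa using hholder
          _ ≤ ENNReal.ofReal (Iμ + Iν) ^ (1 / 2 : ℝ)
              * ENNReal.ofReal (2 * klDiv μ ν) ^ (1 / 2 : ℝ) := by
              have e1 : ∫⁻ z, g z ^ (2:ℝ) ∂ν = ENNReal.ofReal (Iμ + Iν) := by
                rw [lintegral_congr fun z => hg2 z]
                exact hA
              have e2 : ∫⁻ z, h z ^ (2:ℝ) ∂ν ≤ ENNReal.ofReal (2 * klDiv μ ν) := by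
                rw [lintegral_congr fun z => hh2 z]
                exact hB
              rw [e1]
              exact mul_le_mul_right (ENNReal.rpow_le_rpow e2 (by norm_num)) _
      -- conclude
      have hfin : ENNReal.ofReal (Iμ + Iν) ^ (1 / 2 : ℝ)
          * ENNReal.ofReal (2 * klDiv μ ν) ^ (1 / 2 : ℝ) ≠ ⊤ := by
        exact ENNReal.mul_ne_top (ENNReal.rpow_ne_top_of_nonneg (by norm_num) ENNReal.ofReal_ne_top)
          (ENNReal.rpow_ne_top_of_nonneg (by norm_num) ENNReal.ofReal_ne_top)
      refine le_trans (W1_le_cost c hc1 hc2) ?_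
      have hcost_real : ∫ p, |p.1 - p.2| ∂c
          = (∫⁻ p : ℝ × ℝ, ENNReal.ofReal |p.1 - p.2| ∂c).toReal := by
        rw [integral_eq_lintegral_of_nonneg_ae (f := fun p : ℝ × ℝ => |p.1 - p.2|) (Filter.Eventually.of_forall fun p => abs_nonneg _)
          ((measurable_fst.sub measurable_snd).abs).aestronglyMeasurable]
      rw [hcost_real]
      calc (∫⁻ p : ℝ × ℝ, ENNReal.ofReal |p.1 - p.2| ∂c).toReal
          ≤ (ENNReal.ofReal (Iμ + Iν) ^ (1 / 2 : ℝ)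
            * ENNReal.ofReal (2 * klDiv μ ν) ^ (1 / 2 : ℝ)).toReal :=
            ENNReal.toReal_mono hfin (le_trans hcost hdens)
        _ = Real.sqrt (Iμ + Iν) * Real.sqrt (2 * klDiv μ ν) := by
            rw [ENNReal.toReal_mul, ← ENNReal.toReal_rpow, ← ENNReal.toReal_rpow,
              ENNReal.toReal_ofReal (by linarith), ENNReal.toReal_ofReal (by linarith),
              Real.sqrt_eq_rpow, Real.sqrt_eq_rpow]
  -- conclude
  have h2 := pow_le_pow_left₀ (W1_nonneg _ _) hW1 2
  refine le_trans h2 ?_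
  rw [mul_pow, Real.sq_sqrt (by linarith), Real.sq_sqrt (by linarith)]
  have hle : Iμ + Iν ≤ 2 * max Iμ Iν := by
    have := le_max_left Iμ Iν
    have := le_max_right Iμ Iν
    linarith
  calc (Iμ + Iν) * (2 * klDiv μ ν) ≤ (2 * max Iμ Iν) * (2 * klDiv μ ν) :=
        mul_le_mul_of_nonneg_right hle (by linarith)
    _ = 4 * max Iμ Iν * klDiv μ ν := by ring
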